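/- arXiv:2105.06935 — 4 statements merged into one kernel-verified Lean document; each statement's English description precedes it below -/
import Mathlib

section
/- Let m ∈ ℕ with m ≥ 1, let n = 2m, and let z ∈ ℕ with 0 ≤ z < 2^n. Then Σ_{x=0}^{2^n-1} i^{w(x)} (-1)^{z·x} = (-1)^{w(z)} · i^{m+w(z)} · 2^m, where the sum is taken in ℂ. -/
open Finset

/-- Hamming weight of a natural number: number of 1s in its binary representation. -/
def hw (x : ℕ) : ℕ := (Nat.digits 2 x).sum

/-- The `j`-th bit of `z`, as a natural number in `{0,1}`. -/
def nbit (z j : ℕ) : ℕ := if z.testBit j then 1 else 0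

/-- Partial bitwise dot product `∑_{j=0}^{n-1} z_j x_j`. -/
def ndot (n z x : ℕ) : ℕ := ∑ j ∈ Finset.range n, nbit z j * nbit x j

lemma hw_rec (x : ℕ) (hx : 0 < x) : hw x = x % 2 + hw (x / 2) := by
  unfold hw
  rw [Nat.digits_def' (by norm_num) hx, List.sum_cons]

lemma nbit_zero (x : ℕ) : nbit x 0 = x % 2 := by
  rcases Nat.mod_two_eq_zero_or_one x with h | h <;> simp [nbit, Nat.testBit_zero, h]

lemma nbit_succ (x j : ℕ) : nbit x (j + 1) = nbit (x / 2) j := by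
  simp [nbit, Nat.testBit_add_one]

lemma hw_eq_sum (n x : ℕ) (hx : x < 2 ^ n) :
    hw x = ∑ j ∈ Finset.range n, nbit x j := by
  induction n generalizing x with
  | zero => interval_cases x; simp [hw]
  | succ n ih =>
    rw [Finset.sum_range_succ']
    simp only [nbit_succ, nbit_zero]
    rcases Nat.eq_zero_or_pos x with h | h
    · simp [h, hw, nbit]
    · rw [hw_rec x h, ih (x / 2) (by omega), add_comm]

lemma hw_add_pow (n x : ℕ) (hx : x < 2 ^ n) : hw (2 ^ n + x) = hw x + 1 := by
  induction n generalizing x with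
  | zero => interval_cases x; simp [hw]
  | succ n ih =>
    have h1 : 0 < 2 ^ (n + 1) + x := by positivity
    rw [hw_rec _ h1]
    have h2 : (2 ^ (n + 1) + x) % 2 = x % 2 := by
      omega
    have h3 : (2 ^ (n + 1) + x) / 2 = 2 ^ n + x / 2 := by
      rw [pow_succ]; omega
    rw [h2, h3, ih (x / 2) (by omega)]
    rcases Nat.eq_zero_or_pos x with h | h
    · simp [h, hw]
    · rw [hw_rec x h]; ring

lemma key (n z : ℕ) :
    ∑ x ∈ Finset.range (2 ^ n), Complex.I ^ hw x * (-1) ^ ndot n z x =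
      ∏ j ∈ Finset.range n, (1 + Complex.I * (-1) ^ nbit z j) := by
  induction n with
  | zero => simp [hw, ndot]
  | succ n ih =>
    rw [Finset.prod_range_succ, ← ih]
    have hsplit : (2 : ℕ) ^ (n + 1) = 2 ^ n + 2 ^ n := by rw [pow_succ]; ring
    have e1 : ∑ x ∈ Finset.range (2 ^ n), Complex.I ^ hw x * (-1 : ℂ) ^ ndot (n + 1) z x
        = ∑ x ∈ Finset.range (2 ^ n), Complex.I ^ hw x * (-1) ^ ndot n z x := by
      apply Finset.sum_congr rfl
      intro x hx
      simp only [Finset.mem_range] at hx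
      have : ndot (n + 1) z x = ndot n z x := by
        unfold ndot
        rw [Finset.sum_range_succ]
        have : nbit x n = 0 := by simp [nbit, Nat.testBit_lt_two_pow hx]
        simp [this]
      rw [this]
    have e2 : ∑ x ∈ Finset.range (2 ^ n),
          Complex.I ^ hw (2 ^ n + x) * (-1 : ℂ) ^ ndot (n + 1) z (2 ^ n + x)
        = ∑ x ∈ Finset.range (2 ^ n), Complex.I ^ hw x * (-1) ^ ndot n z x
            * (Complex.I * (-1) ^ nbit z n) := by
      apply Finset.sum_congr rfl
      intro x hx
      simp only [Finset.mem_range] at hx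
      have hhw : hw (2 ^ n + x) = hw x + 1 := hw_add_pow n x hx
      have hnd : ndot (n + 1) z (2 ^ n + x) = ndot n z x + nbit z n := by
        unfold ndot
        rw [Finset.sum_range_succ]
        congr 1
        · apply Finset.sum_congr rfl
          intro j hj
          simp only [Finset.mem_range] at hj
          have : nbit (2 ^ n + x) j = nbit x j := by
            simp [nbit, Nat.testBit_two_pow_add_gt hj]
          rw [this]
        · have h1 : nbit (2 ^ n + x) n = 1 := by
            simp [nbit, Nat.testBit_two_pow_add_eq, Nat.testBit_lt_two_pow hx]
          rw [h1, mul_one]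
      rw [hhw, hnd, pow_add, pow_add]
      ring
    rw [hsplit, Finset.sum_range_add, e1, e2, ← Finset.sum_mul]
    ring

theorem stmt_2 (m : ℕ) (hm : 1 ≤ m) (z : ℕ) (hz : z < 2 ^ (2 * m)) :
    ∑ x ∈ Finset.range (2 ^ (2 * m)), Complex.I ^ hw x * (-1) ^ ndot (2 * m) z x =
      (-1) ^ hw z * Complex.I ^ (m + hw z) * 2 ^ m := by
  rw [key]
  have hfac : ∀ j, (1 + Complex.I * (-1) ^ nbit z j) = (1 + Complex.I) * (-Complex.I) ^ nbit z j := by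
    intro j
    by_cases h : z.testBit j
    · simp only [nbit, h, if_true, pow_one]
      linear_combination Complex.I_sq
    · simp [nbit, h]
  calc ∏ j ∈ Finset.range (2 * m), (1 + Complex.I * (-1) ^ nbit z j)
      = ∏ j ∈ Finset.range (2 * m), (1 + Complex.I) * (-Complex.I) ^ nbit z j := by
        exact Finset.prod_congr rfl fun j _ => hfac j
    _ = (1 + Complex.I) ^ (2 * m) * (-Complex.I) ^ (∑ j ∈ Finset.range (2 * m), nbit z j) := by
        rw [Finset.prod_mul_distrib, Finset.prod_const, Finset.prod_pow_eq_pow_sum,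
          Finset.card_range]
    _ = (-1) ^ hw z * Complex.I ^ (m + hw z) * 2 ^ m := by
        rw [← hw_eq_sum _ z hz]
        have h1 : (1 + Complex.I) ^ (2 * m) = (2 * Complex.I) ^ m := by
          rw [pow_mul]
          congr 1
          linear_combination Complex.I_sq
        rw [h1, neg_pow (Complex.I), mul_pow, pow_add]
        ring
end

section
/- Let m ∈ ℕ with m ≥ 1 and let z ∈ ℕ with 0 ≤ z < 2^{2m+2}, with binary representation z_{2m+1}z_{2m}…z_0, and let z_{-2} denote the natural number whose binary representation is z_{2m-1}…z_0 (i.e., z reduced modulo 2^{2m}). Then Σ_{x=0}^{2^{2m+1}-1} i^{w(x)} (-1)^{Σ_{j=0}^{2m} z_j x_j} = (-1)^{w(z_{-2})} · i^{m+w(z_{-2})} · 2^m · (1 + i·(-1)^{z_{2m}}), where the sum is taken in ℂ. -/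
open Finset

lemma hw_step (x : ℕ) : hw x = nbit x 0 + hw (x / 2) := by
  rcases Nat.eq_zero_or_pos x with h | h
  · simp [h, hw, nbit]
  · rw [hw, Nat.digits_def' (by norm_num) h]
    simp only [List.sum_cons]
    have e : nbit x 0 = x % 2 := by
      simp only [nbit, Nat.testBit_zero, decide_eq_true_eq]
      split <;> omega
    rw [e, hw]

lemma hw_sum : ∀ n x : ℕ, x < 2 ^ n → hw x = ∑ j ∈ range n, nbit x j := by
  intro n
  induction n with
  | zero => intro x hx; interval_cases x; simp [hw]
  | succ n ih =>
    intro x hx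
    rw [Finset.sum_range_succ'] -- ∑_{j<n+1} f j = ∑_{j<n} f (j+1) + f 0
    have h2 : x / 2 < 2 ^ n := by omega
    have := ih (x / 2) h2
    rw [hw_step x, this]
    have : ∀ j, nbit x (j + 1) = nbit (x / 2) j := by
      intro j; simp [nbit, Nat.testBit_add_one]
    simp [this]; ring

lemma nbit_high {n x : ℕ} (hx : x < 2 ^ n) {j : ℕ} (hj : n ≤ j) : nbit x j = 0 := by
  simp [nbit, Nat.testBit_lt_two_pow (lt_of_lt_of_le hx (Nat.pow_le_pow_right (by norm_num) hj))]

lemma factor (n z : ℕ) :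
    ∑ x ∈ range (2 ^ n), Complex.I ^ hw x * (-1) ^ ndot n z x =
      ∏ j ∈ range n, (1 + Complex.I * (-1) ^ nbit z j) := by
  induction n with
  | zero => simp [hw, ndot]
  | succ n ih =>
    have hsplit : (2 : ℕ) ^ (n + 1) = 2 ^ n + 2 ^ n := by ring
    rw [Finset.prod_range_succ, ← ih, hsplit, Finset.sum_range_add]
    have key1 : ∀ x < 2 ^ n, ndot (n + 1) z x = ndot n z x := by
      intro x hx
      rw [ndot, ndot, Finset.sum_range_succ, nbit_high hx le_rfl, mul_zero, add_zero]
    have key2 : ∀ x < 2 ^ n, hw (2 ^ n + x) = hw x + 1 := by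
      intro x hx
      have h1 : 2 ^ n + x < 2 ^ (n + 1) := by omega
      rw [hw_sum (n+1) _ h1, hw_sum n x hx, Finset.sum_range_succ]
      have e1 : nbit (2 ^ n + x) n = 1 := by
        simp [nbit, Nat.testBit_two_pow_add_eq,
          Nat.testBit_lt_two_pow hx]
      rw [e1]
      congr 1
      apply Finset.sum_congr rfl
      intro j hj
      simp only [Finset.mem_range] at hj
      simp [nbit, Nat.testBit_two_pow_add_gt hj]
    have key3 : ∀ x < 2 ^ n, ndot (n + 1) z (2 ^ n + x) = ndot n z x + nbit z n := by
      intro x hx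
      rw [ndot, ndot, Finset.sum_range_succ]
      have e1 : nbit (2 ^ n + x) n = 1 := by
        simp [nbit, Nat.testBit_two_pow_add_eq, Nat.testBit_lt_two_pow hx]
      rw [e1, mul_one]
      congr 1
      apply Finset.sum_congr rfl
      intro j hj
      simp only [Finset.mem_range] at hj
      simp [nbit, Nat.testBit_two_pow_add_gt hj]
    have e1 : ∑ x ∈ range (2^n), Complex.I ^ hw x * (-1:ℂ) ^ ndot (n+1) z x
        = ∑ x ∈ range (2^n), Complex.I ^ hw x * (-1) ^ ndot n z x := by
      refine Finset.sum_congr rfl fun x hx => ?_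
      rw [key1 x (Finset.mem_range.mp hx)]
    have e2 : ∑ x ∈ range (2^n), Complex.I ^ hw (2^n + x) * (-1:ℂ) ^ ndot (n+1) z (2^n + x)
        = (∑ x ∈ range (2^n), Complex.I ^ hw x * (-1) ^ ndot n z x) * (Complex.I * (-1) ^ nbit z n) := by
      rw [Finset.sum_mul]
      refine Finset.sum_congr rfl fun x hx => ?_
      rw [key2 x (Finset.mem_range.mp hx), key3 x (Finset.mem_range.mp hx), pow_succ, pow_add]
      ring
    rw [e1, e2]
    ring

theorem stmt_6 (m : ℕ) (hm : 1 ≤ m) (z : ℕ) (hz : z < 2 ^ (2 * m + 2)) :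
    ∑ x ∈ Finset.range (2 ^ (2 * m + 1)), Complex.I ^ hw x * (-1) ^ ndot (2 * m + 1) z x =
      (-1) ^ hw (z % 2 ^ (2 * m)) * Complex.I ^ (m + hw (z % 2 ^ (2 * m))) * 2 ^ m *
        (1 + Complex.I * (-1) ^ nbit z (2 * m)) := by
  rw [factor, Finset.prod_range_succ]
  have hk : hw (z % 2 ^ (2 * m)) = ∑ j ∈ range (2 * m), nbit z j := by
    rw [hw_sum (2 * m) _ (Nat.mod_lt _ (by positivity))]
    apply Finset.sum_congr rfl
    intro j hj
    simp only [Finset.mem_range] at hj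
    simp [nbit, Nat.testBit_mod_two_pow, hj]
  have hfac : ∀ j, (1 + Complex.I * (-1) ^ nbit z j) = (1 + Complex.I) * (-Complex.I) ^ nbit z j := by
    intro j
    by_cases h : z.testBit j <;> simp [nbit, h] <;> linear_combination Complex.I_sq
  have hprod : ∏ j ∈ range (2 * m), (1 + Complex.I * (-1) ^ nbit z j)
      = (1 + Complex.I) ^ (2 * m) * (-Complex.I) ^ (∑ j ∈ range (2 * m), nbit z j) := by
    simp_rw [hfac]
    rw [Finset.prod_mul_distrib, Finset.prod_const, Finset.card_range, Finset.prod_pow_eq_pow_sum]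
  rw [hprod, ← hk]
  have h1 : (1 + Complex.I) ^ (2 * m) = 2 ^ m * Complex.I ^ m := by
    rw [pow_mul]
    have : (1 + Complex.I) ^ 2 = 2 * Complex.I := by
      linear_combination Complex.I_sq
    rw [this, mul_pow]
  have h2 : (-Complex.I) ^ hw (z % 2 ^ (2 * m)) = (-1) ^ hw (z % 2 ^ (2 * m)) * Complex.I ^ hw (z % 2 ^ (2 * m)) := by
    rw [← mul_pow]; ring_nf
  rw [h1, h2, pow_add]
  ring
end

section
/- Let m ∈ ℕ with m ≥ 1, let n = 2m, let H = (1/√2)·[[1,1],[1,-1]] and S = [[1,0],[0,i]]. Then for every z with 0 ≤ z < 2^n, the (z,0)-entry of H^{⊗n} S^{⊗n} H^{⊗n} equals (-1)^{w(z)} · i^{m+w(z)} / 2^m; in particular, in the superposition H^{⊗n} S^{⊗n} H^{⊗n} |0⟩^{⊗n} every basis state |z⟩ has amplitude of modulus 2^{-m} = 2^{-n/2}, and the amplitude depends on z only through w(z). -/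
open Finset

/-- The single-qubit phase gate `S = [[1,0],[0,i]]`. -/
noncomputable def Sgate : Matrix (Fin 2) (Fin 2) ℂ := !![1, 0; 0, Complex.I]

/-- The single-qubit Hadamard gate `H = (1/√2)·[[1,1],[1,-1]]`. -/
noncomputable def Hgate : Matrix (Fin 2) (Fin 2) ℂ :=
  ((Real.sqrt 2 : ℂ))⁻¹ • !![1, 1; 1, -1]

/-- The `n`-fold Kronecker power of a `2 × 2` complex matrix, a `2^n × 2^n` matrix whose
rows and columns are indexed by natural numbers `0 ≤ x < 2^n` via their binary
representations: the entry at `(x, y)` is `∏_{j=0}^{n-1} M (x_j) (y_j)`. -/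
noncomputable def kronPow (n : ℕ) (M : Matrix (Fin 2) (Fin 2) ℂ) :
    Matrix (Fin (2 ^ n)) (Fin (2 ^ n)) ℂ :=
  Matrix.of fun x y => ∏ j ∈ Finset.range n,
    M (if (x : ℕ).testBit j then 1 else 0) (if (y : ℕ).testBit j then 1 else 0)

/-! ### Auxiliary lemmas -/

lemma hw_eq_sum_nbit : ∀ n z : ℕ, z < 2 ^ n → hw z = ∑ j ∈ Finset.range n, nbit z j := by
  intro n
  induction n with
  | zero =>
    intro z hz
    interval_cases z
    simp [hw]
  | succ n ih =>
    intro z hz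
    rcases Nat.eq_zero_or_pos z with rfl | hzpos
    · simp [hw, nbit]
    · have hdig : Nat.digits 2 z = z % 2 :: Nat.digits 2 (z / 2) :=
        Nat.digits_def' (by norm_num) hzpos
      have hdiv : z / 2 < 2 ^ n := by
        have : z < 2 ^ n * 2 := by
          rw [pow_succ] at hz; exact hz
        omega
      have h0 : nbit z 0 = z % 2 := by
        simp only [nbit, Nat.testBit_zero]
        rcases Nat.mod_two_eq_zero_or_one z with h | h <;> simp [h]
      have hsucc : ∀ j, nbit z (j + 1) = nbit (z / 2) j := by
        intro j
        simp [nbit, Nat.testBit_add_one]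
      rw [Finset.sum_range_succ']
      simp only [hsucc, h0]
      have := ih (z / 2) hdiv
      simp only [hw] at *
      rw [hdig]
      simp [this, Nat.add_comm]

lemma testBit_two_pow_add_lt {n j x : ℕ} (hx : x < 2 ^ n) (hj : j < n) :
    (2 ^ n + x).testBit j = x.testBit j := by
  have h1 : (2 ^ n + x) / 2 ^ j = 2 ^ (n - j) + x / 2 ^ j := by
    have h : 2 ^ n = 2 ^ j * 2 ^ (n - j) := by
      rw [← pow_add]; congr 1; omega
    rw [h, Nat.mul_add_div (pow_pos (by norm_num) j)]
  have h2 : (2 ^ (n - j)) % 2 = 0 := by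
    obtain ⟨k, hk⟩ := Nat.exists_eq_add_of_lt hj
    have hnj : n - j = k + 1 := by omega
    rw [hnj, pow_succ]
    omega
  have h3 : (2 ^ (n - j) + x / 2 ^ j) % 2 = (x / 2 ^ j) % 2 := by omega
  rw [Nat.testBit_eq_decide_div_mod_eq, Nat.testBit_eq_decide_div_mod_eq, h1, h3]

lemma testBit_two_pow_add_self {n x : ℕ} (hx : x < 2 ^ n) :
    (2 ^ n + x).testBit n = true := by
  have h1 : (2 ^ n + x) / 2 ^ n = 1 := by
    apply Nat.div_eq_of_lt_le <;> omega
  simp [Nat.testBit_eq_decide_div_mod_eq, h1]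

lemma sum_prod_bits (n : ℕ) (f : ℕ → Bool → ℂ) :
    ∑ x ∈ Finset.range (2 ^ n), ∏ j ∈ Finset.range n, f j (Nat.testBit x j) =
      ∏ j ∈ Finset.range n, (f j false + f j true) := by
  induction n generalizing f with
  | zero => simp
  | succ n ih =>
    have hsplit : (2 : ℕ) ^ (n + 1) = 2 ^ n + 2 ^ n := by ring
    rw [hsplit, Finset.sum_range_add]
    have e1 : ∀ x ∈ Finset.range (2 ^ n),
        ∏ j ∈ Finset.range (n + 1), f j (Nat.testBit x j) =
          (∏ j ∈ Finset.range n, f j (Nat.testBit x j)) * f n false := by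
      intro x hx
      rw [Finset.prod_range_succ]
      congr 1
      rw [Nat.testBit_eq_false_of_lt (Finset.mem_range.mp hx)]
    have e2 : ∀ x ∈ Finset.range (2 ^ n),
        ∏ j ∈ Finset.range (n + 1), f j (Nat.testBit (2 ^ n + x) j) =
          (∏ j ∈ Finset.range n, f j (Nat.testBit x j)) * f n true := by
      intro x hx
      rw [Finset.prod_range_succ]
      congr 1
      · exact Finset.prod_congr rfl fun j hj => by
          rw [testBit_two_pow_add_lt (Finset.mem_range.mp hx) (Finset.mem_range.mp hj)]
      · rw [testBit_two_pow_add_self (Finset.mem_range.mp hx)]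
    rw [Finset.sum_congr rfl e1, Finset.sum_congr rfl e2, ← Finset.sum_mul, ← Finset.sum_mul,
      ih, Finset.prod_range_succ]
    ring

lemma kronPow_mul (n : ℕ) (A B : Matrix (Fin 2) (Fin 2) ℂ) :
    kronPow n A * kronPow n B = kronPow n (A * B) := by
  ext x y
  rw [Matrix.mul_apply]
  have : ∀ k : Fin (2 ^ n), kronPow n A x k * kronPow n B k y =
      ∏ j ∈ Finset.range n,
        (fun j b => A (if (x : ℕ).testBit j then 1 else 0) (if b then 1 else 0) *
          B (if b then 1 else 0) (if (y : ℕ).testBit j then 1 else 0)) j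
          (Nat.testBit (k : ℕ) j) := by
    intro k
    simp only [kronPow, Matrix.of_apply, ← Finset.prod_mul_distrib]
  rw [Finset.sum_congr rfl fun k _ => this k]
  rw [Fin.sum_univ_eq_sum_range (fun k => ∏ j ∈ Finset.range n,
        (fun j b => A (if (x : ℕ).testBit j then 1 else 0) (if b then 1 else 0) *
          B (if b then 1 else 0) (if (y : ℕ).testBit j then 1 else 0)) j
          (Nat.testBit k j)) (2 ^ n)]
  rw [sum_prod_bits n (fun j b => A (if (x : ℕ).testBit j then 1 else 0) (if b then 1 else 0) *
          B (if b then 1 else 0) (if (y : ℕ).testBit j then 1 else 0))]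
  refine Finset.prod_congr rfl fun j _ => ?_
  simp only [Matrix.mul_apply, Fin.sum_univ_two, kronPow, Matrix.of_apply]
  simp

lemma sqrt_two_inv_mul : ((Real.sqrt 2 : ℂ))⁻¹ * ((Real.sqrt 2 : ℂ))⁻¹ = 2⁻¹ := by
  rw [← mul_inv]
  congr 1
  rw [← Complex.ofReal_mul, Real.mul_self_sqrt (by norm_num)]
  norm_num

lemma HSH_apply_zero (b : Fin 2) :
    (Hgate * Sgate * Hgate) b 0 =
      if b = 1 then (1 - Complex.I) / 2 else (1 + Complex.I) / 2 := by
  have hs := sqrt_two_inv_mul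
  fin_cases b <;>
    simp only [Hgate, Sgate, Matrix.mul_apply, Fin.sum_univ_two, Matrix.smul_apply,
      smul_eq_mul, Matrix.cons_val', Matrix.cons_val_zero, Matrix.cons_val_one,
      Matrix.head_cons, Matrix.empty_val', Matrix.cons_val_fin_one, Matrix.head_fin_const,
      Fin.mk_one, Fin.isValue, if_true, if_false] <;>
    norm_num <;>
    first
      | linear_combination (1 + Complex.I) * hs
      | linear_combination (1 - Complex.I) * hs

lemma pow_identity (m w : ℕ) (hw : w ≤ 2 * m) :
    ((1 - Complex.I) / 2) ^ w * ((1 + Complex.I) / 2) ^ (2 * m - w) =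
      (-1) ^ w * Complex.I ^ (m + w) / 2 ^ m := by
  have hI := Complex.I_mul_I
  have h1 : ((1 : ℂ) - Complex.I) = (-Complex.I) * (1 + Complex.I) := by
    linear_combination Complex.I_mul_I
  have h2 : ((1 : ℂ) + Complex.I) ^ 2 = 2 * Complex.I := by
    linear_combination Complex.I_mul_I
  have hne : ((1 : ℂ) + Complex.I) ≠ 0 := by
    intro h
    have := congrArg Complex.im h
    simp at this
  have hsum : 2 * m - w + w = 2 * m := by omega
  have key : ((1 : ℂ) - Complex.I) ^ w * (1 + Complex.I) ^ (2 * m - w) =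
      (-1) ^ w * Complex.I ^ (m + w) * 2 ^ m := by
    have hcancel : ((1 : ℂ) - Complex.I) ^ w * (1 + Complex.I) ^ (2 * m - w) *
        (1 + Complex.I) ^ w =
        ((-1) ^ w * Complex.I ^ (m + w) * 2 ^ m) * (1 + Complex.I) ^ w := by
      rw [mul_assoc, ← pow_add, hsum, pow_mul, h2, h1, pow_add]
      rw [mul_pow, mul_pow, neg_pow]
      ring
    exact mul_right_cancel₀ (pow_ne_zero w hne) hcancel
  rw [div_pow, div_pow, div_mul_div_comm, key, ← pow_add]
  rw [show w + (2 * m - w) = m + m by omega, pow_add]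
  have h2m : (2 : ℂ) ^ m ≠ 0 := pow_ne_zero m two_ne_zero
  field_simp
  ring

theorem stmt_8 (m : ℕ) (hm : 1 ≤ m) (z : Fin (2 ^ (2 * m))) :
    (kronPow (2 * m) Hgate * kronPow (2 * m) Sgate * kronPow (2 * m) Hgate)
        z ⟨0, by positivity⟩ =
      (-1) ^ hw (z : ℕ) * Complex.I ^ (m + hw (z : ℕ)) / 2 ^ m ∧
    ‖(kronPow (2 * m) Hgate * kronPow (2 * m) Sgate * kronPow (2 * m) Hgate)
          z ⟨0, by positivity⟩‖ = ((2 : ℝ) ^ m)⁻¹ := by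
  have hmain : (kronPow (2 * m) Hgate * kronPow (2 * m) Sgate * kronPow (2 * m) Hgate)
      z ⟨0, by positivity⟩ =
      (-1) ^ hw (z : ℕ) * Complex.I ^ (m + hw (z : ℕ)) / 2 ^ m := by
    rw [kronPow_mul, kronPow_mul]
    have hentry : kronPow (2 * m) (Hgate * Sgate * Hgate) z ⟨0, by positivity⟩ =
        ∏ j ∈ Finset.range (2 * m),
          (if (z : ℕ).testBit j then ((1 - Complex.I) / 2) else ((1 + Complex.I) / 2)) := by
      simp only [kronPow, Matrix.of_apply]
      refine Finset.prod_congr rfl fun j _ => ?_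
      have h0 : (((⟨0, by positivity⟩ : Fin (2 ^ (2 * m))) : ℕ)).testBit j = false :=
        Nat.zero_testBit j
      rw [h0]
      simp only [if_neg Bool.false_ne_true]
      rw [apply_ite (fun a : Fin 2 => (Hgate * Sgate * Hgate) a 0)]
      rw [HSH_apply_zero, HSH_apply_zero]
      norm_num
    rw [hentry, Finset.prod_ite, Finset.prod_const, Finset.prod_const]
    have hwz : hw (z : ℕ) = (Finset.filter (fun j => (z : ℕ).testBit j)
        (Finset.range (2 * m))).card := by
      rw [hw_eq_sum_nbit (2 * m) (z : ℕ) z.isLt, Finset.card_filter]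
      simp [nbit]
    have hcards : (Finset.filter (fun j => (z : ℕ).testBit j) (Finset.range (2 * m))).card +
        (Finset.filter (fun j => ¬ (z : ℕ).testBit j) (Finset.range (2 * m))).card = (2 * m) :=
      (Finset.card_filter_add_card_filter_not _).trans (Finset.card_range (2 * m))
    have hle : (Finset.filter (fun j => (z : ℕ).testBit j) (Finset.range (2 * m))).card ≤ (2 * m) := by
      omega
    have hneg : (Finset.filter (fun j => ¬ (z : ℕ).testBit j) (Finset.range (2 * m))).card =
        (2 * m) - hw (z : ℕ) := by omega
    rw [hneg, ← hwz]
    exact pow_identity m (hw (z : ℕ)) (hwz ▸ hle)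
  refine ⟨hmain, ?_⟩
  rw [hmain]
  rw [norm_div, norm_mul, norm_pow, norm_pow, norm_pow]
  simp [Complex.norm_I]
end

section
/- Let m ∈ ℕ, let n = 2m+1, let H = (1/√2)·[[1,1],[1,-1]] and S = [[1,0],[0,i]]. Then for every z with 0 ≤ z < 2^n, the (z,0)-entry of H^{⊗n} S^{⊗n} H^{⊗n} equals (-1)^{w(z)} · i^{m+w(z)} · (1+i) / 2^{m+1}; in particular, in the superposition H^{⊗n} S^{⊗n} H^{⊗n} |0⟩^{⊗n} every basis state |z⟩ has amplitude of modulus 2^{-n/2}, and the amplitude depends on z only through w(z). -/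
open Finset

lemma bit_enc {n : ℕ} (f : Fin n → Fin 2) (j : Fin n) :
    (if (finFunctionFinEquiv f : ℕ).testBit j then (1 : Fin 2) else 0) = f j := by
  have h3 : (finFunctionFinEquiv f : ℕ) / 2 ^ (j : ℕ) % 2 = (f j : ℕ) := by
    rw [← finFunctionFinEquiv_symm_apply_val, finFunctionFinEquiv.symm_apply_apply f]
  rw [Nat.testBit_eq_decide_div_mod_eq, h3]
  rcases Fin.exists_fin_two.mp ⟨f j, rfl⟩ with h | h <;> rw [h] <;> simp

lemma HSH_eq : Hgate * Sgate * Hgate =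
    (2:ℂ)⁻¹ • !![1 + Complex.I, 1 - Complex.I; 1 - Complex.I, 1 + Complex.I] := by
  have h2 : ((Real.sqrt 2 : ℂ))⁻¹ * ((Real.sqrt 2 : ℂ))⁻¹ = (2:ℂ)⁻¹ := by
    rw [← mul_inv, ← Complex.ofReal_mul, Real.mul_self_sqrt (by norm_num)]
    norm_num
  rw [Hgate, Sgate, Matrix.smul_mul, Matrix.mul_smul, Matrix.smul_mul, smul_smul, h2]
  congr 1
  rw [Matrix.mul_fin_two, Matrix.mul_fin_two]
  norm_num [sub_eq_add_neg]

lemma hw_eq (n : ℕ) : ∀ z < 2 ^ n, ∑ j ∈ Finset.range n, nbit z j = hw z := by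
  induction n with
  | zero => intro z hz; interval_cases z; simp [hw]
  | succ n ih =>
    intro z hz
    rcases Nat.eq_zero_or_pos z with rfl | hpos
    · simp [nbit, hw]
    rw [Finset.sum_range_succ']
    have hb : ∀ j, nbit z (j + 1) = nbit (z / 2) j := by
      intro j; simp [nbit, Nat.testBit_succ]
    simp only [hb]
    rw [ih (z / 2) (by omega)]
    have h0 : nbit z 0 = z % 2 := by
      simp only [nbit, Nat.testBit_zero, decide_eq_true_eq]
      split <;> omega
    have hd : hw z = z % 2 + hw (z / 2) := by
      rw [hw, Nat.digits_def' (by norm_num : 1 < 2) (by omega)]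
      simp [hw]
    omega

lemma alg (m w d : ℕ) (hd : w + d = 2*m+1) :
    ((2:ℂ)⁻¹*(1-Complex.I))^w * ((2:ℂ)⁻¹*(1+Complex.I))^d =
      (-1)^w * Complex.I^(m+w) * (1+Complex.I)/2^(m+1) := by
  have k1 : (1 - Complex.I) = (-1) * Complex.I * (1+Complex.I) := by
    linear_combination Complex.I_sq
  have k2 : (1+Complex.I)^2 = 2*Complex.I := by linear_combination Complex.I_sq
  have e1 : ((2:ℂ)⁻¹*(1-Complex.I))^w * ((2:ℂ)⁻¹*(1+Complex.I))^d =
      (2:ℂ)⁻¹^(w+d) * ((-1)^w * Complex.I^w * (1+Complex.I)^(w+d)) := by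
    rw [k1]; simp only [mul_pow, pow_add]; ring
  rw [e1, hd, pow_succ (1+Complex.I), pow_mul, k2, mul_pow (2:ℂ), pow_add Complex.I m w]
  field_simp
  have hX : ((1:ℂ)/2)^(m*2) * 2^(m*2) = 1 := by rw [← mul_pow]; norm_num
  linear_combination (1 + Complex.I) * hX

theorem stmt_9 (m : ℕ) (z : Fin (2 ^ (2 * m + 1))) :
    (kronPow (2 * m + 1) Hgate * kronPow (2 * m + 1) Sgate * kronPow (2 * m + 1) Hgate)
        z ⟨0, by positivity⟩ =
      (-1) ^ hw (z : ℕ) * Complex.I ^ (m + hw (z : ℕ)) * (1 + Complex.I) / 2 ^ (m + 1) ∧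
    ‖(kronPow (2 * m + 1) Hgate * kronPow (2 * m + 1) Sgate * kronPow (2 * m + 1) Hgate)
          z ⟨0, by positivity⟩‖ = (Real.sqrt (2 ^ (2 * m + 1)))⁻¹ := by
  have hmain : (kronPow (2*m+1) Hgate * kronPow (2*m+1) Sgate * kronPow (2*m+1) Hgate)
      z ⟨0, by positivity⟩ =
      (-1) ^ hw (z : ℕ) * Complex.I ^ (m + hw (z : ℕ)) * (1 + Complex.I) / 2 ^ (m + 1) := by
    rw [kronPow_mul, kronPow_mul, HSH_eq]
    have hentry : kronPow (2*m+1) ((2:ℂ)⁻¹ • !![1 + Complex.I, 1 - Complex.I;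
          1 - Complex.I, 1 + Complex.I]) z ⟨0, by positivity⟩ =
        ∏ j ∈ Finset.range (2*m+1), (if (z:ℕ).testBit j then (2:ℂ)⁻¹*(1-Complex.I)
          else (2:ℂ)⁻¹*(1+Complex.I)) := by
      simp only [kronPow, Matrix.of_apply]
      refine Finset.prod_congr rfl fun j _ => ?_
      have h0 : ((⟨0, by positivity⟩ : Fin (2^(2*m+1))) : ℕ).testBit j = false :=
        Nat.zero_testBit j
      rw [h0]
      simp only [Bool.false_eq_true, if_false]
      split <;> simp
    rw [hentry, Finset.prod_ite (fun _ => (2:ℂ)⁻¹*(1-Complex.I))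
      (fun _ => (2:ℂ)⁻¹*(1+Complex.I)), Finset.prod_const, Finset.prod_const]
    have hwz : ((Finset.range (2*m+1)).filter (fun j => (z:ℕ).testBit j)).card = hw (z : ℕ) := by
      rw [← hw_eq (2*m+1) (z:ℕ) z.isLt]
      simp [nbit, Finset.sum_boole]
    have hcards : ((Finset.range (2*m+1)).filter (fun j => (z:ℕ).testBit j)).card +
        ((Finset.range (2*m+1)).filter (fun j => ¬ (z:ℕ).testBit j)).card = 2*m+1 :=
      (Finset.card_filter_add_card_filter_not _).trans (Finset.card_range _)
    rw [hwz] at hcards ⊢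
    rw [show ((Finset.range (2*m+1)).filter (fun j => ¬ (z:ℕ).testBit j)).card
        = 2*m+1 - hw (z:ℕ) by omega]
    exact alg m (hw (z:ℕ)) (2*m+1 - hw (z:ℕ)) (by omega)
  refine ⟨hmain, ?_⟩
  rw [hmain]
  rw [norm_div, norm_mul, norm_mul, norm_pow, norm_pow, norm_pow]
  have ha1 : ‖(-1 : ℂ)‖ = 1 := by simp
  have ha2 : ‖Complex.I‖ = 1 := Complex.norm_I
  have ha3 : ‖1 + Complex.I‖ = Real.sqrt 2 := by
    rw [Complex.norm_def, Complex.normSq_apply]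
    norm_num
  have ha4 : ‖(2 : ℂ)‖ = 2 := by simp
  rw [ha1, ha2, ha3, ha4, one_pow, one_pow, one_mul, one_mul]
  have hsq : Real.sqrt ((2:ℝ) ^ (2*m+1)) = 2 ^ m * Real.sqrt 2 := by
    rw [show (2:ℝ)^(2*m+1) = ((2:ℝ)^m)^2 * 2 by ring,
      Real.sqrt_mul (by positivity), Real.sqrt_sq (by positivity)]
  rw [hsq, mul_inv]
  have hs2 : Real.sqrt 2 * Real.sqrt 2 = 2 := Real.mul_self_sqrt (by norm_num)
  have hs0 : Real.sqrt 2 ≠ 0 := by positivity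
  field_simp
  linear_combination (2:ℝ)^m * hs2
end
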